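/- Let K ⊆ ℕ be infinite and suppose the limits γ_1 = lim_{k ∈ K} q_{k+1}/q_k and δ_1 = lim_{k ∈ K} η_{k+1}/η_k exist and are finite. Then lim_{k ∈ K} q_k η_k = 1/(γ_1 + δ_1). -/

import Mathlib

open MeasureTheory Filter Set Topology

/-- Iterates of the Gauss map starting at `α`; `cfTail α k` has continued
fraction expansion `[c_{k+1}, c_{k+2}, ...]` when `α = [c_1, c_2, ...]`. -/
noncomputable def cfTail (α : ℝ) : ℕ → ℝ
  | 0 => α
  | n + 1 => Int.fract (1 / cfTail α n)

/-- `cfC α k` is the partial quotient `c_{k+1}` of the continued fraction of `α`. -/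
noncomputable def cfC (α : ℝ) (k : ℕ) : ℤ := ⌊1 / cfTail α k⌋

/-- Numerators of the convergents: `p 0 = 0`, `p 1 = 1`, `p k = c_k p_{k-1} + p_{k-2}`. -/
noncomputable def cfP (α : ℝ) : ℕ → ℤ
  | 0 => 0
  | 1 => 1
  | k + 2 => cfC α (k + 1) * cfP α (k + 1) + cfP α k

/-- Denominators of the convergents: `q 0 = 1`, `q 1 = c_1`, `q k = c_k q_{k-1} + q_{k-2}`. -/
noncomputable def cfQ (α : ℝ) : ℕ → ℤ
  | 0 => 1
  | 1 => cfC α 0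
  | k + 2 => cfC α (k + 1) * cfQ α (k + 1) + cfQ α k

/-- `η_k = |q_k α - p_k|`. -/
noncomputable def cfEta (α : ℝ) (k : ℕ) : ℝ := |(cfQ α k : ℝ) * α - (cfP α k : ℝ)|

lemma cfTail_prop (α : ℝ) (hirr : Irrational α) (hα : α ∈ Set.Ioo (0 : ℝ) 1) (k : ℕ) :
    cfTail α k ∈ Set.Ioo (0 : ℝ) 1 ∧ Irrational (cfTail α k) := by
  induction k with
  | zero => exact ⟨hα, hirr⟩
  | succ n ih =>
    obtain ⟨⟨h0, h1⟩, hi⟩ := ih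
    have hinv : Irrational (1 / cfTail α n) := by
      rw [one_div]; exact hi.inv
    have hfr : Irrational (Int.fract (1 / cfTail α n)) := by
      rw [Int.fract]; exact hinv.sub_intCast _
    refine ⟨⟨?_, ?_⟩, hfr⟩
    · rw [show cfTail α (n + 1) = Int.fract (1 / cfTail α n) from rfl]
      rw [Int.fract_pos]
      exact fun h => hinv.ne_int _ h
    · exact Int.fract_lt_one _

lemma cfC_ge_one (α : ℝ) (hirr : Irrational α) (hα : α ∈ Set.Ioo (0 : ℝ) 1) (k : ℕ) :
    1 ≤ cfC α k := by
  obtain ⟨⟨h0, h1⟩, _⟩ := cfTail_prop α hirr hα k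
  have : (1 : ℝ) ≤ 1 / cfTail α k := by
    rw [le_div_iff₀ h0]; linarith
  exact Int.le_floor.mpr (by exact_mod_cast this)

lemma cfQ_ge_one (α : ℝ) (hirr : Irrational α) (hα : α ∈ Set.Ioo (0 : ℝ) 1) :
    ∀ k, 1 ≤ cfQ α k ∧ cfQ α k ≤ cfQ α (k + 1) := by
  intro k
  induction k with
  | zero =>
    exact ⟨le_refl _, by simpa [cfQ] using cfC_ge_one α hirr hα 0⟩
  | succ n ih =>
    obtain ⟨h1, h2⟩ := ih
    have hc := cfC_ge_one α hirr hα (n + 1)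
    refine ⟨le_trans h1 h2, ?_⟩
    have : cfQ α (n + 2) = cfC α (n + 1) * cfQ α (n + 1) + cfQ α n := rfl
    rw [this]
    nlinarith

lemma cf_det (α : ℝ) :
    ∀ k, cfP α (k + 1) * cfQ α k - cfP α k * cfQ α (k + 1) = (-1) ^ k := by
  intro k
  induction k with
  | zero => simp [cfP, cfQ]
  | succ n ih =>
    have hp : cfP α (n + 2) = cfC α (n + 1) * cfP α (n + 1) + cfP α n := rfl
    have hq : cfQ α (n + 2) = cfC α (n + 1) * cfQ α (n + 1) + cfQ α n := rfl
    rw [hp, hq, pow_succ]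
    nlinarith [ih]

/-- The product `α β₁ ⋯ β_k`. -/
noncomputable def cfB (α : ℝ) (k : ℕ) : ℝ := ∏ i ∈ Finset.range (k + 1), cfTail α i

lemma cfB_pos (α : ℝ) (hirr : Irrational α) (hα : α ∈ Set.Ioo (0 : ℝ) 1) (k : ℕ) :
    0 < cfB α k :=
  Finset.prod_pos fun i _ => (cfTail_prop α hirr hα i).1.1

lemma cfX_eq (α : ℝ) (hirr : Irrational α) (hα : α ∈ Set.Ioo (0 : ℝ) 1) :
    ∀ k, (cfQ α k : ℝ) * α - (cfP α k : ℝ) = (-1) ^ k * cfB α k ∧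
      (cfQ α (k + 1) : ℝ) * α - (cfP α (k + 1) : ℝ) = (-1) ^ (k + 1) * cfB α (k + 1) := by
  have hβ : ∀ i, cfTail α i ≠ 0 := fun i => ne_of_gt (cfTail_prop α hirr hα i).1.1
  have hsucc : ∀ i, cfTail α (i + 1) = 1 / cfTail α i - (cfC α i : ℝ) := by
    intro i
    show Int.fract (1 / cfTail α i) = _
    rw [Int.fract, cfC]
  have hBsucc : ∀ i, cfB α (i + 1) = cfB α i * cfTail α (i + 1) := by
    intro i
    rw [cfB, cfB, Finset.prod_range_succ]
  have hB0 : cfB α 0 = α := by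
    rw [cfB]; rw [Finset.prod_range_one]; rfl
  intro k
  induction k with
  | zero =>
    constructor
    · simp [cfQ, cfP, hB0]
    · have h1 : cfB α 1 = α * cfTail α 1 := by
        rw [hBsucc 0, hB0]
      have h2 := hsucc 0
      have h0 : cfTail α 0 = α := rfl
      rw [h0] at h2
      have hαne : α ≠ 0 := ne_of_gt hα.1
      simp only [cfQ, cfP, h1, h2]
      push_cast
      field_simp
      ring
  | succ n ih =>
    obtain ⟨h1, h2⟩ := ih
    refine ⟨h2, ?_⟩
    have hp : cfP α (n + 2) = cfC α (n + 1) * cfP α (n + 1) + cfP α n := rfl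
    have hq : cfQ α (n + 2) = cfC α (n + 1) * cfQ α (n + 1) + cfQ α n := rfl
    have hc : (cfC α (n + 1) : ℝ) = 1 / cfTail α (n + 1) - cfTail α (n + 2) := by
      rw [hsucc (n + 1)]; ring
    have hB1 := hBsucc n
    have hB2 := hBsucc (n + 1)
    have hne := hβ (n + 1)
    have key : ((cfC α (n + 1) : ℝ)) * ((cfQ α (n + 1) : ℝ) * α - cfP α (n + 1)) +
        ((cfQ α n : ℝ) * α - cfP α n) = (-1) ^ (n + 2) * cfB α (n + 2) := by
      rw [h1, h2, hc, hB2, hB1]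
      field_simp
      ring
    calc (cfQ α (n + 2) : ℝ) * α - cfP α (n + 2)
        = ((cfC α (n + 1) : ℝ)) * ((cfQ α (n + 1) : ℝ) * α - cfP α (n + 1)) +
          ((cfQ α n : ℝ) * α - cfP α n) := by rw [hp, hq]; push_cast; ring
      _ = (-1) ^ (n + 2) * cfB α (n + 2) := key

lemma cfEta_eq (α : ℝ) (hirr : Irrational α) (hα : α ∈ Set.Ioo (0 : ℝ) 1) (k : ℕ) :
    cfEta α k = cfB α k := by
  rw [cfEta, (cfX_eq α hirr hα k).1, abs_mul, abs_pow, abs_neg, abs_one, one_pow, one_mul,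
    abs_of_pos (cfB_pos α hirr hα k)]

lemma cfEta_pos (α : ℝ) (hirr : Irrational α) (hα : α ∈ Set.Ioo (0 : ℝ) 1) (k : ℕ) :
    0 < cfEta α k := by
  rw [cfEta_eq α hirr hα]; exact cfB_pos α hirr hα k

lemma cf_key (α : ℝ) (hirr : Irrational α) (hα : α ∈ Set.Ioo (0 : ℝ) 1) (k : ℕ) :
    (cfQ α (k + 1) : ℝ) * cfEta α k + (cfQ α k : ℝ) * cfEta α (k + 1) = 1 := by
  have h1 := (cfX_eq α hirr hα k).1
  have h2 := (cfX_eq α hirr hα k).2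
  have hd := cf_det α k
  have hd' : ((cfP α (k + 1) : ℝ)) * cfQ α k - (cfP α k : ℝ) * cfQ α (k + 1) = (-1) ^ k := by
    exact_mod_cast congrArg (Int.cast : ℤ → ℝ) hd
  rw [cfEta_eq α hirr hα, cfEta_eq α hirr hα]
  have e1 : cfB α k = (-1) ^ k * ((cfQ α k : ℝ) * α - cfP α k) := by
    rw [h1]; rcases Nat.even_or_odd k with h | h
    · rw [h.neg_one_pow]; ring
    · rw [h.neg_one_pow]; ring
  have e2 : cfB α (k + 1) = (-1) ^ (k + 1) * ((cfQ α (k + 1) : ℝ) * α - cfP α (k + 1)) := by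
    rw [h2]; rcases Nat.even_or_odd (k + 1) with h | h
    · rw [h.neg_one_pow]; ring
    · rw [h.neg_one_pow]; ring
  rw [e1, e2, pow_succ]
  calc (cfQ α (k + 1) : ℝ) * ((-1) ^ k * ((cfQ α k : ℝ) * α - cfP α k)) +
      (cfQ α k : ℝ) * ((-1) ^ k * (-1) * ((cfQ α (k + 1) : ℝ) * α - cfP α (k + 1)))
      = (-1) ^ k * (((cfP α (k + 1) : ℝ)) * cfQ α k - (cfP α k : ℝ) * cfQ α (k + 1)) := by ring
    _ = (-1) ^ k * (-1 : ℝ) ^ k := by rw [hd']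
    _ = 1 := by rw [← pow_add, ← two_mul, pow_mul]; norm_num

theorem stmt6 (α : ℝ) (hirr : Irrational α) (hα : α ∈ Set.Ioo (0 : ℝ) 1)
    (K : Set ℕ) (hK : K.Infinite) (γ1 δ1 : ℝ)
    (hγ : Tendsto (fun k => (cfQ α (k + 1) : ℝ) / (cfQ α k : ℝ)) (atTop ⊓ 𝓟 K) (𝓝 γ1))
    (hδ : Tendsto (fun k => cfEta α (k + 1) / cfEta α k) (atTop ⊓ 𝓟 K) (𝓝 δ1)) :
    Tendsto (fun k => (cfQ α k : ℝ) * cfEta α k) (atTop ⊓ 𝓟 K) (𝓝 (1 / (γ1 + δ1))) := by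
  have hNeBot : (atTop ⊓ 𝓟 K).NeBot := by
    rw [← Nat.cofinite_eq_atTop]
    exact hK.cofinite_inf_principal_neBot
  have hq : ∀ k, (1 : ℝ) ≤ (cfQ α k : ℝ) := fun k => by
    exact_mod_cast (cfQ_ge_one α hirr hα k).1
  have hqm : ∀ k, (cfQ α k : ℝ) ≤ (cfQ α (k + 1) : ℝ) := fun k => by
    exact_mod_cast (cfQ_ge_one α hirr hα k).2
  have hqpos : ∀ k, (0 : ℝ) < (cfQ α k : ℝ) := fun k => lt_of_lt_of_le one_pos (hq k)
  have hηpos := cfEta_pos α hirr hα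
  have hf1 : ∀ k, (1 : ℝ) ≤ (cfQ α (k + 1) : ℝ) / (cfQ α k : ℝ) := fun k =>
    (one_le_div (hqpos k)).mpr (hqm k)
  have hg0 : ∀ k, (0 : ℝ) ≤ cfEta α (k + 1) / cfEta α k := fun k =>
    le_of_lt (div_pos (hηpos (k + 1)) (hηpos k))
  have hγ1 : (1 : ℝ) ≤ γ1 := ge_of_tendsto hγ (Eventually.of_forall hf1)
  have hδ1 : (0 : ℝ) ≤ δ1 := ge_of_tendsto hδ (Eventually.of_forall hg0)
  have hsum : γ1 + δ1 ≠ 0 := by positivity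
  have heq : ∀ k, (cfQ α k : ℝ) * cfEta α k =
      1 / ((cfQ α (k + 1) : ℝ) / (cfQ α k : ℝ) + cfEta α (k + 1) / cfEta α k) := by
    intro k
    have hk := cf_key α hirr hα k
    have hq0 : (cfQ α k : ℝ) ≠ 0 := ne_of_gt (hqpos k)
    have hη0 : cfEta α k ≠ 0 := ne_of_gt (hηpos k)
    rw [eq_div_iff]
    · field_simp
      linarith [hk]
    · have : (0 : ℝ) < (cfQ α (k + 1) : ℝ) / (cfQ α k : ℝ) + cfEta α (k + 1) / cfEta α k := by
        have := hf1 k; have := hg0 k; linarith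
      exact ne_of_gt this
  have hlim : Tendsto (fun k => (cfQ α (k + 1) : ℝ) / (cfQ α k : ℝ) +
      cfEta α (k + 1) / cfEta α k) (atTop ⊓ 𝓟 K) (𝓝 (γ1 + δ1)) := hγ.add hδ
  have := (tendsto_const_nhds (x := (1 : ℝ)) (f := atTop ⊓ 𝓟 K)).div hlim hsum
  exact Tendsto.congr (fun k => (heq k).symm) this
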